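/- arXiv:1712.06779 — 3 statements merged into one kernel-verified Lean document; each statement's English description precedes it below -/
import Mathlib

section
/- If W is an open subset of X × X that is contractible within X × X (i.e., the inclusion W ↪ X × X is null-homotopic), then there exists a continuous local section over W of the map π : C([0,1],X) → X × X, γ ↦ (γ(0),γ(1)). In particular, every categorical open cover of X × X of cardinality n witnesses TC(X) ≤ n, so TC(X) ≤ cat(X × X). -/
open Set unitInterval

noncomputable section

/-- A set `U ⊆ X × X` admits a continuous local section of the endpoint map
`π : C(I, X) → X × X`, `γ ↦ (γ 0, γ 1)`. -/
def HasSecAt {X : Type*} [TopologicalSpace X] (U : Set (X × X)) : Prop :=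
  ∃ s : C(U, C(unitInterval, X)),
    ∀ u : U, s u 0 = (u : X × X).1 ∧ s u 1 = (u : X × X).2

/-- `TC(X) ≤ n` : `X × X` is covered by `n` open sets, each with a section of the
endpoint map. -/
def TCLE (X : Type*) [TopologicalSpace X] (n : ℕ) : Prop :=
  ∃ U : Fin n → Set (X × X), (∀ i, IsOpen (U i)) ∧ (⋃ i, U i) = univ ∧ ∀ i, HasSecAt (U i)

/-- Farber's (non-reduced) topological complexity, valued in `ℕ∞`. -/
def tc (X : Type*) [TopologicalSpace X] : ℕ∞ :=
  sInf {n : ℕ∞ | ∃ m : ℕ, n = m ∧ TCLE X m}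

/-- `W` is contractible within `X` : the inclusion `W ↪ X` is null-homotopic. -/
def ContractibleIn {X : Type*} [TopologicalSpace X] (W : Set X) : Prop :=
  ∃ (x₀ : X) (F : C(W × unitInterval, X)),
    (∀ w : W, F (w, 0) = w) ∧ (∀ w : W, F (w, 1) = x₀)

/-- `cat(X) ≤ n` : `X` is covered by `n` open sets, each contractible within `X`. -/
def CatLE (X : Type*) [TopologicalSpace X] (n : ℕ) : Prop :=
  ∃ U : Fin n → Set X, (∀ i, IsOpen (U i)) ∧ (⋃ i, U i) = univ ∧ ∀ i, ContractibleIn (U i)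

/-- The (non-reduced) Lusternik–Schnirelmann category, valued in `ℕ∞`. -/
def cat (X : Type*) [TopologicalSpace X] : ℕ∞ :=
  sInf {n : ℕ∞ | ∃ m : ℕ, n = m ∧ CatLE X m}

/-- `x₀` is a non-degenerate basepoint of `X` : the inclusion `{x₀} ↪ X` is a
cofibration, i.e. the pair `(X, {x₀})` has the homotopy extension property. -/
def NondegPt {X : Type*} [TopologicalSpace X] (x₀ : X) : Prop :=
  ∀ (Z : Type*) [TopologicalSpace Z] (f : C(X, Z)) (H : C(unitInterval, Z)),
    H 0 = f x₀ → ∃ G : C(X × unitInterval, Z),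
      (∀ x, G (x, 0) = f x) ∧ (∀ t, G (x₀, t) = H t)

/-- The relation generating the wedge identification `inl x₀ ~ inr y₀`. -/
def WedgeRel {X Y : Type*} (x₀ : X) (y₀ : Y) : X ⊕ Y → X ⊕ Y → Prop :=
  fun a b => (a = Sum.inl x₀ ∨ a = Sum.inr y₀) ∧ (b = Sum.inl x₀ ∨ b = Sum.inr y₀)

/-- The wedge sum `X ∨ Y` at the basepoints `x₀`, `y₀`. -/
def Wedge {X Y : Type*} [TopologicalSpace X] [TopologicalSpace Y] (x₀ : X) (y₀ : Y) :=
  Quot (WedgeRel x₀ y₀)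

instance {X Y : Type*} [TopologicalSpace X] [TopologicalSpace Y] (x₀ : X) (y₀ : Y) :
    TopologicalSpace (Wedge x₀ y₀) :=
  inferInstanceAs (TopologicalSpace (Quot _))

/-- Inclusion of `X` into the wedge. -/
def Wedge.inl {X Y : Type*} [TopologicalSpace X] [TopologicalSpace Y] (x₀ : X) (y₀ : Y)
    (x : X) : Wedge x₀ y₀ := Quot.mk _ (Sum.inl x)

/-- Inclusion of `Y` into the wedge. -/
def Wedge.inr {X Y : Type*} [TopologicalSpace X] [TopologicalSpace Y] (x₀ : X) (y₀ : Y)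
    (y : Y) : Wedge x₀ y₀ := Quot.mk _ (Sum.inr y)

/-- The basepoint of the wedge. -/
def Wedge.pt {X Y : Type*} [TopologicalSpace X] [TopologicalSpace Y] (x₀ : X) (y₀ : Y) :
    Wedge x₀ y₀ := Wedge.inl x₀ y₀ x₀


lemma aux5 {X : Type*} [TopologicalSpace X] [PathConnectedSpace X]
    (W : Set (X × X)) (hc : ContractibleIn W) : HasSecAt W := by
  obtain ⟨c, F, hF0, hF1⟩ := hc
  set sp : Path c.1 c.2 := (PathConnectedSpace.somePath c.1 c.2)
  have cont1 : Continuous (fun p : W × unitInterval => (F p).1) :=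
    continuous_fst.comp F.continuous
  have cont2 : Continuous (fun p : W × unitInterval => (F p).2) :=
    continuous_snd.comp F.continuous
  set p1 : ∀ w : W, Path (w : X × X).1 c.1 := fun w =>
    { toFun := fun t => (F (w, t)).1
      continuous_toFun := cont1.comp (Continuous.prodMk_right w)
      source' := congrArg Prod.fst (hF0 w)
      target' := congrArg Prod.fst (hF1 w) }
  set p2 : ∀ w : W, Path (w : X × X).2 c.2 := fun w =>
    { toFun := fun t => (F (w, t)).2
      continuous_toFun := cont2.comp (Continuous.prodMk_right w)
      source' := congrArg Prod.snd (hF0 w)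
      target' := congrArg Prod.snd (hF1 w) }
  have h1 : Continuous ↿p1 := cont1
  have h2 : Continuous ↿p2 := cont2
  set g : ∀ w : W, Path (w : X × X).1 (w : X × X).2 := fun w =>
    (p1 w).trans (sp.trans (p2 w).symm)
  have hg : Continuous ↿g := by
    apply Path.trans_continuous_family _ h1
    apply Path.trans_continuous_family (fun _ : W => sp)
    · exact sp.continuous.comp continuous_snd
    · exact Path.symm_continuous_family _ h2
  refine ⟨(ContinuousMap.mk ↿g hg).curry, fun u => ?_⟩
  constructor
  · exact (g u).source
  · exact (g u).target

theorem stmt5 {X : Type*} [TopologicalSpace X] [PathConnectedSpace X]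
    (W : Set (X × X)) (hW : IsOpen W) (hc : ContractibleIn W) :
    HasSecAt W ∧ tc X ≤ cat (X × X) := by
  refine ⟨aux5 W hc, sInf_le_sInf ?_⟩
  rintro n ⟨m, rfl, U, hopen, hcov, hctr⟩
  exact ⟨m, rfl, U, hopen, hcov, fun i => aux5 (U i) (hctr i)⟩
end
end

section
/- For any path-connected topological spaces X and Y with basepoints, TC(X ∨ Y) ≥ max{TC(X), TC(Y), cat(X × Y)}. -/
open Set unitInterval

noncomputable section

section Aux

variable {W Z : Type*} [TopologicalSpace W] [TopologicalSpace Z]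

lemma tcle_of_retract (r : C(W, Z)) (j : C(Z, W)) (hrj : ∀ z, r (j z) = z)
    {n : ℕ} (h : TCLE W n) : TCLE Z n := by
  obtain ⟨U, hopen, hcov, hsec⟩ := h
  refine ⟨fun i => (fun p : Z × Z => (j p.1, j p.2)) ⁻¹' U i,
    fun i => (hopen i).preimage (by fun_prop), ?_, ?_⟩
  · rw [← preimage_iUnion, hcov, preimage_univ]
  · intro i
    obtain ⟨s, hs⟩ := hsec i
    have hgc : Continuous (fun u : ((fun p : Z × Z => (j p.1, j p.2)) ⁻¹' U i) =>
        (⟨(j (u : Z × Z).1, j (u : Z × Z).2), u.2⟩ : U i)) := by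
      apply Continuous.subtype_mk
      fun_prop
    refine ⟨⟨fun u => r.comp (s ⟨(j (u : Z × Z).1, j (u : Z × Z).2), u.2⟩), ?_⟩, ?_⟩
    · exact (ContinuousMap.continuous_postcomp r).comp (s.continuous.comp hgc)
    · intro u
      constructor
      · show r (s _ 0) = _
        rw [(hs _).1]; exact hrj _
      · show r (s _ 1) = _
        rw [(hs _).2]; exact hrj _

lemma tc_le_of_retract (r : C(W, Z)) (j : C(Z, W)) (hrj : ∀ z, r (j z) = z) :
    tc Z ≤ tc W := by
  apply sInf_le_sInf
  rintro n ⟨m, rfl, hm⟩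
  exact ⟨m, rfl, tcle_of_retract r j hrj hm⟩

end Aux

section WedgeAux

variable {X Y : Type*} [TopologicalSpace X] [TopologicalSpace Y] (x₀ : X) (y₀ : Y)

lemma wedgeRel_lift {Z : Type*} (f : X ⊕ Y → Z) (h : f (Sum.inl x₀) = f (Sum.inr y₀)) :
    ∀ a b, WedgeRel x₀ y₀ a b → f a = f b := by
  rintro a b ⟨ha | ha, hb | hb⟩ <;> subst ha <;> subst hb <;> simp [h]

/-- Retraction onto `X`. -/
def wedgeRetrL : C(Wedge x₀ y₀, X) :=
  ⟨Quot.lift (Sum.elim id fun _ => x₀) (wedgeRel_lift x₀ y₀ _ rfl),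
    continuous_quot_lift _ (continuous_id.sumElim continuous_const)⟩

/-- Retraction onto `Y`. -/
def wedgeRetrR : C(Wedge x₀ y₀, Y) :=
  ⟨Quot.lift (Sum.elim (fun _ => y₀) id) (wedgeRel_lift x₀ y₀ _ rfl),
    continuous_quot_lift _ (continuous_const.sumElim continuous_id)⟩

lemma continuous_wedge_inl : Continuous (Wedge.inl x₀ y₀) :=
  continuous_quot_mk.comp continuous_inl

lemma continuous_wedge_inr : Continuous (Wedge.inr x₀ y₀) :=
  continuous_quot_mk.comp continuous_inr

@[simp] lemma wedgeRetrL_inl (x : X) : wedgeRetrL x₀ y₀ (Wedge.inl x₀ y₀ x) = x := rfl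
@[simp] lemma wedgeRetrL_inr (y : Y) : wedgeRetrL x₀ y₀ (Wedge.inr x₀ y₀ y) = x₀ := rfl
@[simp] lemma wedgeRetrR_inl (x : X) : wedgeRetrR x₀ y₀ (Wedge.inl x₀ y₀ x) = y₀ := rfl
@[simp] lemma wedgeRetrR_inr (y : Y) : wedgeRetrR x₀ y₀ (Wedge.inr x₀ y₀ y) = y := rfl

lemma catle_prod_of_tcle {n : ℕ} (h : TCLE (Wedge x₀ y₀) n) : CatLE (X × Y) n := by
  obtain ⟨U, hopen, hcov, hsec⟩ := h
  set f : X × Y → Wedge x₀ y₀ × Wedge x₀ y₀ := fun p => (Wedge.inl x₀ y₀ p.1, Wedge.inr x₀ y₀ p.2) with hf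
  have hfc : Continuous f :=
    ((continuous_wedge_inl x₀ y₀).comp continuous_fst).prodMk
      ((continuous_wedge_inr x₀ y₀).comp continuous_snd)
  refine ⟨fun i => f ⁻¹' U i, fun i => (hopen i).preimage hfc, ?_, ?_⟩
  · rw [← preimage_iUnion, hcov, preimage_univ]
  · intro i
    obtain ⟨s, hs⟩ := hsec i
    set g : (f ⁻¹' U i) → C(unitInterval, Wedge x₀ y₀) := fun v => s ⟨f v, v.2⟩ with hg
    have hgc : Continuous g :=
      s.continuous.comp (Continuous.subtype_mk (hfc.comp continuous_subtype_val) _)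
    refine ⟨(x₀, y₀), ⟨fun p => (wedgeRetrL x₀ y₀ (g p.1 p.2),
        wedgeRetrR x₀ y₀ (g p.1 (unitInterval.symm p.2))), ?_⟩, ?_, ?_⟩
    · apply Continuous.prodMk
      · exact (wedgeRetrL x₀ y₀).continuous.comp
          (continuous_eval.comp ((hgc.comp continuous_fst).prodMk continuous_snd))
      · exact (wedgeRetrR x₀ y₀).continuous.comp
          (continuous_eval.comp ((hgc.comp continuous_fst).prodMk
            (continuous_symm.comp continuous_snd)))
    · intro v
      have h0 := (hs ⟨f v, v.2⟩).1
      have h1 := (hs ⟨f v, v.2⟩).2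
      simp only [ContinuousMap.coe_mk, unitInterval.symm_zero]
      rw [h0, h1]
      rfl
    · intro v
      have h0 := (hs ⟨f v, v.2⟩).1
      have h1 := (hs ⟨f v, v.2⟩).2
      simp only [ContinuousMap.coe_mk, unitInterval.symm_one]
      rw [h0, h1]
      rfl

end WedgeAux

theorem stmt9 {X Y : Type*} [TopologicalSpace X] [TopologicalSpace Y]
    [PathConnectedSpace X] [PathConnectedSpace Y] (x₀ : X) (y₀ : Y) :
    max (max (tc X) (tc Y)) (cat (X × Y)) ≤ tc (Wedge x₀ y₀) := by
  have hX : tc X ≤ tc (Wedge x₀ y₀) :=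
    tc_le_of_retract (wedgeRetrL x₀ y₀)
      ⟨Wedge.inl x₀ y₀, continuous_wedge_inl x₀ y₀⟩ (fun x => rfl)
  have hY : tc Y ≤ tc (Wedge x₀ y₀) :=
    tc_le_of_retract (wedgeRetrR x₀ y₀)
      ⟨Wedge.inr x₀ y₀, continuous_wedge_inr x₀ y₀⟩ (fun y => rfl)
  have hC : cat (X × Y) ≤ tc (Wedge x₀ y₀) := by
    apply sInf_le_sInf
    rintro n ⟨m, rfl, hm⟩
    exact ⟨m, rfl, catle_prod_of_tcle x₀ y₀ hm⟩
  exact max_le (max_le hX hY) hC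
end
end

section
/- Let X be a normal space, U₁,…,Uₙ an open cover, W₁,…,Wₙ a shrinking with cl(Wᵢ) ⊆ Uᵢ, and suppose z₀ ∈ Uᵢ exactly for i = 1,…,k (k < n). Let B be any open neighbourhood of z₀. Then 𝒩 := B ∩ U₁ ∩ ⋯ ∩ Uₖ ∩ (X ∖ cl(W_{k+1})) ∩ ⋯ ∩ (X ∖ cl(Wₙ)) is an open neighbourhood of z₀ disjoint from Wⱼ for every j > k, and for any open M with z₀ ∈ M ⊆ cl(M) ⊆ 𝒩, the sets Vᵢ := (Uᵢ ∩ (X ∖ cl(M))) ∪ M for i ≤ k and Vᵢ := Wᵢ ∪ 𝒩 for i > k form an open cover of X with z₀ ∈ Vᵢ for all i. -/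
open Set unitInterval

noncomputable section

theorem stmt19 {X : Type*} [TopologicalSpace X] [NormalSpace X] (z₀ : X) (n k : ℕ)
    (hk : 1 ≤ k) (hkn : k < n)
    (U W : Fin n → Set X) (hUopen : ∀ i, IsOpen (U i)) (hUcover : (⋃ i, U i) = univ)
    (hz : ∀ i : Fin n, z₀ ∈ U i ↔ (i : ℕ) < k)
    (hWopen : ∀ i, IsOpen (W i)) (hWcover : (⋃ i, W i) = univ)
    (hWU : ∀ i, closure (W i) ⊆ U i)
    (B : Set X) (hB : IsOpen B) (hzB : z₀ ∈ B)
    (N : Set X)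
    (hN : N = B ∩ ⋂ i : Fin n, if (i : ℕ) < k then U i else (closure (W i))ᶜ)
    (M : Set X) (hM : IsOpen M) (hzM : z₀ ∈ M) (hMN : closure M ⊆ N)
    (V : Fin n → Set X)
    (hV : ∀ i : Fin n,
      V i = if (i : ℕ) < k then (U i ∩ (closure M)ᶜ) ∪ M else W i ∪ N) :
    IsOpen N ∧ z₀ ∈ N ∧ (∀ j : Fin n, k ≤ (j : ℕ) → N ∩ W j = ∅) ∧
      (∀ i, IsOpen (V i)) ∧ (⋃ i, V i) = univ ∧ (∀ i, z₀ ∈ V i) := by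
  subst hN
  have hNopen : IsOpen (B ∩ ⋂ i : Fin n, if (i : ℕ) < k then U i else (closure (W i))ᶜ) := by
    refine hB.inter (isOpen_iInter_of_finite fun i => ?_)
    split
    · exact hUopen i
    · exact (isClosed_closure).isOpen_compl
  have hzN : z₀ ∈ B ∩ ⋂ i : Fin n, if (i : ℕ) < k then U i else (closure (W i))ᶜ := by
    refine ⟨hzB, mem_iInter.2 fun i => ?_⟩
    split <;> rename_i h
    · exact (hz i).2 h
    · intro hc
      exact h ((hz i).1 (hWU i hc))
  have hNsub : ∀ j : Fin n, k ≤ (j : ℕ) →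
      (B ∩ ⋂ i : Fin n, if (i : ℕ) < k then U i else (closure (W i))ᶜ) ⊆ (closure (W j))ᶜ := by
    intro j hj x hx
    have := mem_iInter.1 hx.2 j
    rwa [if_neg (Nat.not_lt.2 hj)] at this
  refine ⟨hNopen, hzN, ?_, ?_, ?_, ?_⟩
  · intro j hj
    ext x
    simp only [mem_inter_iff, mem_empty_iff_false, iff_false]
    rintro ⟨hx, hxW⟩
    exact hNsub j hj hx (subset_closure hxW)
  · intro i
    rw [hV i]
    split
    · exact ((hUopen i).inter isClosed_closure.isOpen_compl).union hM
    · exact (hWopen i).union hNopen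
  · ext x
    simp only [mem_iUnion, mem_univ, iff_true]
    by_cases hx : x ∈ closure M
    · refine ⟨⟨k, hkn⟩, ?_⟩
      rw [hV ⟨k, hkn⟩, if_neg (by simp)]
      exact Or.inr (hMN hx)
    · have : x ∈ ⋃ i, W i := hWcover ▸ mem_univ x
      obtain ⟨i, hi⟩ := mem_iUnion.1 this
      refine ⟨i, ?_⟩
      rw [hV i]
      split <;> rename_i h
      · exact Or.inl ⟨hWU i (subset_closure hi), hx⟩
      · exact Or.inl hi
  · intro i
    rw [hV i]
    split <;> rename_i h
    · exact Or.inr hzM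
    · exact Or.inr hzN
end
end
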